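/- If G is a finitely generated abelian group with no 2-torsion, then the automorphism group of the core quandle Core(G) is a residually finite group. -/

import Mathlib

open Quandles

def ResiduallyFiniteGroup (G : Type*) [Group G] : Prop :=
  ∀ g : G, g ≠ 1 →
    ∃ (F : Type) (_ : Group F) (_ : Fintype F) (φ : G →* F), φ g ≠ 1

/-- The core quandle of a group: the underlying set of `G` with the operation
`a * b = b a⁻¹ b` (here written with the acting element first). -/
def Core (G : Type*) [Group G] : Type _ := G

instance Core.instGroup (G : Type*) [Group G] : Group (Core G) := ‹Group G›

instance Core.instQuandle (G : Type*) [Group G] : Quandle (Core G) where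
  act x y := x * y⁻¹ * x
  self_distrib := by intro x y z; group
  invAct x y := x * y⁻¹ * x
  left_inv x y := by show x * (x * y⁻¹ * x)⁻¹ * x = y; group
  right_inv x y := by show x * (x * y⁻¹ * x)⁻¹ * x = y; group
  fix := by intro x; show x * x⁻¹ * x = x; group

/-- The group of automorphisms of a quandle, under composition. -/
def QuandleAut (Q : Type*) [Quandle Q] : Type _ :=
  {f : Q ≃ Q // ∀ x y : Q, f (x ◃ y) = f x ◃ f y}

instance QuandleAut.instGroup (Q : Type*) [Quandle Q] : Group (QuandleAut Q) where
  mul f g := ⟨g.1.trans f.1, by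
    intro x y
    simp only [Equiv.trans_apply, g.2, f.2]⟩
  one := ⟨Equiv.refl Q, by intro x y; rfl⟩
  inv f := ⟨f.1.symm, by
    intro x y
    apply f.1.injective
    rw [f.2]
    simp⟩
  mul_assoc f g h := Subtype.ext (Equiv.ext fun x => rfl)
  one_mul f := Subtype.ext (Equiv.ext fun x => rfl)
  mul_one f := Subtype.ext (Equiv.ext fun x => rfl)
  inv_mul_cancel f := Subtype.ext (Equiv.ext fun x => f.1.symm_apply_apply x)

/-! ### Auxiliary lemmas -/

/-- Separation for f.g. abelian (additive) groups. -/
lemma add_sep (A : Type*) [AddCommGroup A] [AddGroup.FG A] (a : A) (ha : a ≠ 0) :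
    ∃ (F : Type) (_ : AddCommGroup F) (_ : Fintype F) (φ : A →+ F), φ a ≠ 0 := by
  obtain ⟨n, ι, fι, p, hp, e, ⟨f⟩⟩ := AddCommGroup.equiv_free_prod_directSum_zmod A
  have hx : f a ≠ 0 := fun h => ha (by rwa [← map_zero f, f.injective.eq_iff] at h)
  by_cases h1 : (f a).1 = 0
  · have h2 : (f a).2 ≠ 0 := fun h => hx (Prod.ext h1 h)
    obtain ⟨i, hi⟩ := DFinsupp.ne_iff.1 h2
    haveI : NeZero (p i ^ e i) := ⟨pow_ne_zero _ (hp i).pos.ne'⟩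
    refine ⟨ZMod (p i ^ e i), inferInstance, inferInstance,
      (DFinsupp.evalAddMonoidHom i).comp
        ((AddMonoidHom.snd _ _).comp f.toAddMonoidHom), ?_⟩
    exact hi
  · have h2 : (f a).1 ≠ 0 := h1
    obtain ⟨i, hi⟩ := Finsupp.ne_iff.1 h2
    set k : ℤ := (f a).1 i with hk
    have hk0 : k ≠ 0 := by simpa using hi
    refine ⟨ZMod (k.natAbs + 1), inferInstance, inferInstance,
      (Int.castAddHom (ZMod (k.natAbs + 1))).comp
        ((Finsupp.applyAddHom i).comp ((AddMonoidHom.fst _ _).comp f.toAddMonoidHom)), ?_⟩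
    show ((k : ℤ) : ZMod (k.natAbs + 1)) ≠ 0
    intro h0
    rw [ZMod.intCast_zmod_eq_zero_iff_dvd] at h0
    have := Int.le_of_dvd (abs_pos.2 hk0) ((dvd_abs _ _).2 h0)
    rw [Int.abs_eq_natAbs] at this
    push_cast at this
    omega

/-- Separation for f.g. abelian (multiplicative) groups. -/
lemma mul_sep {G : Type*} [CommGroup G] (hfg : Group.FG G) (g : G) (hg : g ≠ 1) :
    ∃ (F : Type) (_ : Group F) (_ : Fintype F) (φ : G →* F), φ g ≠ 1 := by
  haveI := hfg
  haveI : AddGroup.FG (Additive G) := GroupFG.iff_add_fg.mp hfg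
  obtain ⟨F, _, _, φ, hφ⟩ := add_sep (Additive G) (Additive.ofMul g) hg
  exact ⟨Multiplicative F, inferInstance, inferInstance,
    AddMonoidHom.toMultiplicativeRight φ, hφ⟩

/-- A map of a 2-torsion-free abelian group preserving the core quandle
operation is affine: `x ↦ (e 1)⁻¹ * e x` is multiplicative. -/
lemma core_psi_hom {G : Type*} [CommGroup G] (h2 : ∀ g : G, g * g = 1 → g = 1)
    (e : G → G) (he : ∀ x y : G, e (x * y⁻¹ * x) = e x * (e y)⁻¹ * e x) :
    ∀ a b : G, (e 1)⁻¹ * e (a * b) = ((e 1)⁻¹ * e a) * ((e 1)⁻¹ * e b) := by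
  set ψ : G → G := fun x => (e 1)⁻¹ * e x with hψ
  have hone : ψ 1 = 1 := inv_mul_cancel _
  have hkey : ∀ x y : G, ψ (x * y⁻¹ * x) = ψ x * (ψ y)⁻¹ * ψ x := by
    intro x y
    simp only [hψ, he x y]
    group
  have hinv : ∀ y : G, ψ y⁻¹ = (ψ y)⁻¹ := by
    intro y
    have h := hkey 1 y
    simpa [hone] using h
  have hsq : ∀ x : G, ψ (x * x) = ψ x * ψ x := by
    intro x
    have h := hkey x 1
    simpa [hone] using h
  have hgen : ∀ a b : G, ψ (a * a * (b * b)) = ψ a * ψ a * (ψ b * ψ b) := by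
    intro a b
    have h := hkey a (b * b)⁻¹
    rw [inv_inv, hinv, inv_inv, hsq b] at h
    have harr : a * (b * b) * a = a * a * (b * b) := by ac_rfl
    rw [harr] at h
    rw [h]; ac_rfl
  intro a b
  have h1 : ψ a * ψ a * (ψ b * ψ b) = ψ (a * b) * ψ (a * b) := by
    have h := hsq (a * b)
    have harr : a * b * (a * b) = a * a * (b * b) := by ac_rfl
    rw [harr, hgen] at h
    exact h
  have h3 : (ψ (a * b) * (ψ a * ψ b)⁻¹) * (ψ (a * b) * (ψ a * ψ b)⁻¹) = 1 := by
    have hre : ∀ u v w : G, u * (v * w)⁻¹ * (u * (v * w)⁻¹)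
        = (u * u) * (v * v * (w * w))⁻¹ := by
      intro u v w
      simp only [mul_inv]
      ac_rfl
    rw [hre, ← h1, mul_inv_cancel]
  have h4 := mul_inv_eq_one.mp (h2 _ h3)
  simpa [hψ] using h4

/-- If `G` is a finitely generated abelian group with no 2-torsion, then the
automorphism group of the core quandle of `G` is residually finite. -/
theorem aut_core_residually_finite (G : Type*) [CommGroup G] (hfg : Group.FG G)
    (h2 : ∀ g : G, g * g = 1 → g = 1) :
    ResiduallyFiniteGroup (QuandleAut (Core G)) := by
  intro f hf
  have hx : ∃ x : Core G, f.1 x ≠ x := by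
    by_contra h
    push_neg at h
    exact hf (Subtype.ext (Equiv.ext h))
  obtain ⟨x0, hx0⟩ := hx
  set y0 : G := f.1 x0 with hy0
  set x1 : G := x0 with hx1
  have hg : y0⁻¹ * x1 ≠ 1 := fun h => hx0 (inv_mul_eq_one.mp h)
  obtain ⟨F0, _, _, φ, hφ⟩ := mul_sep hfg (y0⁻¹ * x1) hg
  set n := Fintype.card F0 with hn
  set H : Subgroup G := (powMonoidHom n : G →* G).range with hH
  haveI : H.Normal := H.normal_of_comm
  have hHφ : ∀ z ∈ H, φ z = 1 := by
    rintro z ⟨y, rfl⟩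
    show φ (y ^ n) = 1
    rw [map_pow]
    exact pow_card_eq_one
  haveI := hfg
  haveI : Group.FG (G ⧸ H) := Group.fg_of_surjective (QuotientGroup.mk'_surjective H)
  have hnpos : 0 < n := Fintype.card_pos
  haveI : Finite (G ⧸ H) := by
    refine CommGroup.finite_of_fg_torsion _ (fun q => ?_)
    obtain ⟨x, rfl⟩ := QuotientGroup.mk'_surjective H q
    refine isOfFinOrder_iff_pow_eq_one.2 ⟨n, hnpos, ?_⟩
    rw [← map_pow, QuotientGroup.mk'_apply, QuotientGroup.eq_one_iff]
    exact ⟨x, rfl⟩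
  haveI : Fintype (G ⧸ H) := Fintype.ofFinite _
  haveI : DecidableEq (G ⧸ H) := Classical.decEq _
  -- every quandle automorphism descends to `G ⧸ H`
  have hdesc : ∀ (u : QuandleAut (Core G)) (x y : G),
      QuotientGroup.leftRel H x y → QuotientGroup.leftRel H (u.1 x) (u.1 y) := by
    intro u x y hxy
    rw [QuotientGroup.leftRel_apply] at hxy
    refine QuotientGroup.leftRel_apply.mpr ?_
    show (u.1 x)⁻¹ * u.1 y ∈ H
    have hu : ∀ a b : G, u.1 (a * b⁻¹ * a) = u.1 a * (u.1 b)⁻¹ * u.1 a := u.2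
    have hm := core_psi_hom h2 (fun z => u.1 z) hu
    set ψ : G →* G :=
      { toFun := fun z => (u.1 1)⁻¹ * u.1 z
        map_one' := inv_mul_cancel _
        map_mul' := hm } with hψ
    obtain ⟨z, hz⟩ := hxy
    have key : (u.1 x)⁻¹ * u.1 y = ψ (x⁻¹ * y) := by
      rw [map_mul, map_inv]
      show (u.1 x)⁻¹ * u.1 y = ((u.1 1)⁻¹ * u.1 x)⁻¹ * ((u.1 1)⁻¹ * u.1 y)
      group
    rw [key, ← hz]
    exact ⟨ψ z, by simp⟩
  let Fm : QuandleAut (Core G) → (G ⧸ H) → (G ⧸ H) := fun u => Quotient.map' u.1 (hdesc u)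
  have Fm_mk : ∀ (u : QuandleAut (Core G)) (x : G),
      Fm u (QuotientGroup.mk x) = QuotientGroup.mk (u.1 x) := fun _ _ => rfl
  have Fm_comp : ∀ u v : QuandleAut (Core G), Fm (u * v) = Fm u ∘ Fm v := by
    intro u v
    funext q
    induction q using Quotient.inductionOn' with
    | h x => rfl
  have Fm_id : Fm 1 = id := by
    funext q
    induction q using Quotient.inductionOn' with
    | h x => rfl
  let Φfun : QuandleAut (Core G) → Equiv.Perm (G ⧸ H) := fun u =>
    { toFun := Fm u
      invFun := Fm u⁻¹
      left_inv := fun q => by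
        have h : Fm u⁻¹ (Fm u q) = Fm (u⁻¹ * u) q := by rw [Fm_comp]; rfl
        rw [h, inv_mul_cancel, Fm_id]; rfl
      right_inv := fun q => by
        have h : Fm u (Fm u⁻¹ q) = Fm (u * u⁻¹) q := by rw [Fm_comp]; rfl
        rw [h, mul_inv_cancel, Fm_id]; rfl }
  let Φ : QuandleAut (Core G) →* Equiv.Perm (G ⧸ H) :=
    { toFun := Φfun
      map_one' := Equiv.ext fun q => by show Fm 1 q = q; rw [Fm_id]; rfl
      map_mul' := fun u v => Equiv.ext fun q => by
        show Fm (u * v) q = Fm u (Fm v q)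
        rw [Fm_comp]; rfl }
  -- transport to a permutation group in `Type 0`
  set m := Fintype.card (G ⧸ H) with hm
  let ε : (G ⧸ H) ≃ Fin m := Fintype.equivFin _
  let ρ : Equiv.Perm (G ⧸ H) →* Equiv.Perm (Fin m) :=
    { toFun := fun σ => (ε.symm.trans σ).trans ε
      map_one' := Equiv.ext fun i => by simp
      map_mul' := fun σ τ => Equiv.ext fun i => by simp }
  refine ⟨Equiv.Perm (Fin m), inferInstance, inferInstance, ρ.comp Φ, ?_⟩
  intro hΦ
  have happ : (ρ (Φ f)) (ε (QuotientGroup.mk x0)) = ε (QuotientGroup.mk x0) := by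
    rw [show ρ (Φ f) = (ρ.comp Φ) f from rfl, hΦ]
    rfl
  have happ2 : Fm f (QuotientGroup.mk x0) = QuotientGroup.mk x0 := by
    have : ε (Fm f (QuotientGroup.mk x0)) = ε (QuotientGroup.mk x0) := by
      simpa [ρ, Φ, Φfun] using happ
    exact ε.injective this
  change (QuotientGroup.mk (y0 : G) : G ⧸ H) = QuotientGroup.mk (x1 : G) at happ2
  have hmem : y0⁻¹ * x1 ∈ H := QuotientGroup.eq.mp happ2
  exact hφ (hHφ _ hmem)
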